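/- Let G be a finite simple graph, let S and T be vertex covers of G with |S| = |T|, let μ be an integer with 1 ≤ μ ≤ |S|, and set k = |S| − μ. Define the reconfiguration graph 𝒞 whose vertices are the vertex covers of G of cardinality exactly |S|, two distinct such covers S' and T' being joined by an edge if and only if |S' △ T'| ≤ 2k. Define the clique-compressed reconfiguration graph 𝒞' whose vertices are the μ-element subsets of V(G), two distinct such subsets X and Y being joined by an edge if and only if there exists a vertex cover W of G with |W| = |S| and X ∪ Y ⊆ W. Then for every X ⊆ S and Y ⊆ T with |X| = |Y| = μ, the covers S and T are connected by a walk in 𝒞 if and only if X and Y are connected by a walk in 𝒞'. -/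

import Mathlib

/-- A vertex cover: every edge has at least one endpoint in the set. -/
def IsVC {α : Type*} (G : SimpleGraph α) (S : Finset α) : Prop :=
  ∀ ⦃u v⦄, G.Adj u v → u ∈ S ∨ v ∈ S

/-- The reconfiguration graph `𝒞`: nodes are the vertex covers of `G` of cardinality
exactly `c`, two distinct such covers being joined by an edge iff their symmetric
difference has cardinality at most `2k` (i.e. they are adjacent under `k`-TJ).
(It is realized on all of `Finset α`; finsets that are not vertex covers of
cardinality `c` are isolated.) -/
def reconGraph {α : Type*} [DecidableEq α] (G : SimpleGraph α) (c k : ℕ) :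
    SimpleGraph (Finset α) where
  Adj A B := A ≠ B ∧ IsVC G A ∧ IsVC G B ∧ A.card = c ∧ B.card = c ∧
    (symmDiff A B).card ≤ 2 * k
  symm := by
    constructor
    rintro A B ⟨h1, h2, h3, h4, h5, h6⟩
    exact ⟨h1.symm, h3, h2, h5, h4, by rwa [symmDiff_comm]⟩
  loopless := by constructor; rintro A ⟨h1, -⟩; exact h1 rfl

/-- The clique-compressed reconfiguration graph `𝒞'`: nodes are the `μ`-element subsets
of the vertex set, two distinct such subsets `X`, `Y` being joined by an edge iff there
is a vertex cover `W` of `G` of cardinality `c` with `X ∪ Y ⊆ W`.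
(It is realized on all of `Finset α`; finsets of cardinality other than `μ` are
isolated.) -/
def cliqueGraph {α : Type*} [DecidableEq α] (G : SimpleGraph α) (c μ : ℕ) :
    SimpleGraph (Finset α) where
  Adj X Y := X ≠ Y ∧ X.card = μ ∧ Y.card = μ ∧
    ∃ W : Finset α, IsVC G W ∧ W.card = c ∧ X ∪ Y ⊆ W
  symm := by
    constructor
    rintro X Y ⟨h1, h2, h3, W, hW1, hW2, hW3⟩
    exact ⟨h1.symm, h3, h2, W, hW1, hW2, by rwa [Finset.union_comm]⟩
  loopless := by constructor; rintro X ⟨h1, -⟩; exact h1 rfl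

lemma recon_reach {V : Type*} [DecidableEq V] (G : SimpleGraph V) {c μ : ℕ} (hμc : μ ≤ c)
    {A B Z : Finset V} (hA : IsVC G A) (hB : IsVC G B) (hAc : A.card = c) (hBc : B.card = c)
    (hZA : Z ⊆ A) (hZB : Z ⊆ B) (hZ : Z.card = μ) :
    (reconGraph G c (c - μ)).Reachable A B := by
  by_cases h : A = B
  · exact h ▸ SimpleGraph.Reachable.refl A
  · refine SimpleGraph.Adj.reachable ⟨h, hA, hB, hAc, hBc, ?_⟩
    have hZI : Z ⊆ A ∩ B := Finset.subset_inter hZA hZB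
    have h1 : μ ≤ (A ∩ B).card := hZ ▸ Finset.card_le_card hZI
    have h2 : (A \ B).card + (A ∩ B).card = A.card := Finset.card_sdiff_add_card_inter A B
    have h3 : (B \ A).card + (B ∩ A).card = B.card := Finset.card_sdiff_add_card_inter B A
    have h4 : (B ∩ A).card = (A ∩ B).card := by rw [Finset.inter_comm]
    have h5 : (symmDiff A B).card = (A \ B).card + (B \ A).card := by
      rw [symmDiff_def, Finset.sup_eq_union]
      exact Finset.card_union_of_disjoint (disjoint_sdiff_sdiff)
    omega

lemma clique_reach {V : Type*} [DecidableEq V] (G : SimpleGraph V) {c μ : ℕ}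
    {X Y W : Finset V} (hW : IsVC G W) (hWc : W.card = c) (hXW : X ⊆ W) (hYW : Y ⊆ W)
    (hXc : X.card = μ) (hYc : Y.card = μ) :
    (cliqueGraph G c μ).Reachable X Y := by
  by_cases h : X = Y
  · exact h ▸ SimpleGraph.Reachable.refl X
  · exact SimpleGraph.Adj.reachable ⟨h, hXc, hYc, W, hW, hWc, Finset.union_subset hXW hYW⟩

lemma forward_dir {V : Type*} [DecidableEq V] (G : SimpleGraph V) {c μ : ℕ} (hμc : μ ≤ c) :
    ∀ {A B : Finset V} (_ : (reconGraph G c (c - μ)).Walk A B), IsVC G A → A.card = c →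
      IsVC G B → B.card = c → ∀ {Z Z' : Finset V}, Z ⊆ A → Z.card = μ → Z' ⊆ B → Z'.card = μ →
      (cliqueGraph G c μ).Reachable Z Z' := by
  intro A B p
  induction p with
  | nil =>
    intro hA hAc _ _ Z Z' hZA hZc hZ'B hZ'c
    exact clique_reach G hA hAc hZA hZ'B hZc hZ'c
  | cons h q ih =>
    intro hA hAc hB hBc Z Z' hZA hZc hZ'B hZ'c
    obtain ⟨-, -, hA', -, hA'c, hsd⟩ := h
    rename_i u v w
    have hZI : μ ≤ (u ∩ v).card := by
      have h2 := Finset.card_sdiff_add_card_inter u v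
      have h3 := Finset.card_sdiff_add_card_inter v u
      have h4 : (v ∩ u).card = (u ∩ v).card := by rw [Finset.inter_comm]
      have h5 : (symmDiff u v).card = (u \ v).card + (v \ u).card := by
        rw [symmDiff_def, Finset.sup_eq_union]
        exact Finset.card_union_of_disjoint (disjoint_sdiff_sdiff)
      omega
    obtain ⟨Z'', hZ''sub, hZ''c⟩ := Finset.exists_subset_card_eq hZI
    have hstep : (cliqueGraph G c μ).Reachable Z Z'' :=
      clique_reach G hA hAc hZA (hZ''sub.trans Finset.inter_subset_left) hZc hZ''c
    exact hstep.trans (ih hA' hA'c hB hBc (hZ''sub.trans Finset.inter_subset_right) hZ''c hZ'B hZ'c)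

lemma backward_dir {V : Type*} [DecidableEq V] (G : SimpleGraph V) {c μ : ℕ} (hμc : μ ≤ c) :
    ∀ {X Y : Finset V} (_ : (cliqueGraph G c μ).Walk X Y), X.card = μ →
      ∀ {A B : Finset V}, IsVC G A → A.card = c → IsVC G B → B.card = c →
      X ⊆ A → Y ⊆ B → (reconGraph G c (c - μ)).Reachable A B := by
  intro X Y p
  induction p with
  | nil =>
    intro hXc A B hA hAc hB hBc hXA hXB
    exact recon_reach G hμc hA hB hAc hBc hXA hXB hXc
  | cons h q ih =>
    intro hXc A B hA hAc hB hBc hXA hYB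
    obtain ⟨-, -, hX'c, W, hW, hWc, hsub⟩ := h
    have h1 : (reconGraph G c (c - μ)).Reachable A W :=
      recon_reach G hμc hA hW hAc hWc hXA
        ((Finset.subset_union_left).trans hsub) hXc
    exact h1.trans (ih hX'c hW hWc hB hBc ((Finset.subset_union_right).trans hsub) hYB)

theorem stmt5 {V : Type*} [Fintype V] [DecidableEq V] (G : SimpleGraph V)
    (S T : Finset V) (hS : IsVC G S) (hT : IsVC G T) (hST : S.card = T.card)
    (μ : ℕ) (hμ1 : 1 ≤ μ) (hμ2 : μ ≤ S.card)
    (X Y : Finset V) (hX : X ⊆ S) (hY : Y ⊆ T) (hXcard : X.card = μ) (hYcard : Y.card = μ) :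
    (reconGraph G S.card (S.card - μ)).Reachable S T ↔
      (cliqueGraph G S.card μ).Reachable X Y := by
  constructor
  · intro h
    exact h.elim fun p =>
      forward_dir G hμ2 p hS rfl hT hST.symm hX hXcard hY hYcard
  · intro h
    exact h.elim fun p =>
      backward_dir G hμ2 p hXcard hS rfl hT hST.symm hX hY
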